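/- arXiv:2004.12957 — 5 statements merged into one kernel-verified Lean document; each statement's English description precedes it below -/
import Mathlib

section
/- Suppose positive real numbers P_tx, D_tx, D_rx, η, ρ_t, ρ_r, λ and nonnegative reals |E_t|, |E_r|, S_t, S_r, P_rx, |g| satisfy: S_t = P_tx·D_tx/(4π·ρ_t²) (radiation intensity at the IRS), S_t = |E_t|²/(2η), |E_r|² = (|g|²/(4π·ρ_r²))·|E_t|² (reflected field at distance ρ_r given by the tile response function), S_r = |E_r|²/(2η), and P_rx = S_r·D_rx·λ²/(4π) (power collected by the receive antenna of effective area D_rx·λ²/(4π)). Then P_rx/P_tx = D_tx·D_rx·(4π·|g|²/λ²)·(λ/(4π·ρ_t))²·(λ/(4π·ρ_r))²; i.e., the free-space path-loss of the IRS-assisted link decomposes as PL_IRS = (4π|g|²/λ²)·PL_t·PL_r with PL_t = (λ/(4πρ_t))² and PL_r = (λ/(4πρ_r))². -/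
/-- Lemma 1 (free-space path-loss of an IRS-assisted link):
`P_rx / P_tx = D_tx · D_rx · (4π|g|²/λ²) · PL_t · PL_r`. -/
theorem irs_pathloss_decomposition
    (Ptx Dtx Drx η ρt ρr lam : ℝ)
    (hPtx : 0 < Ptx) (hDtx : 0 < Dtx) (hDrx : 0 < Drx) (hη : 0 < η)
    (hρt : 0 < ρt) (hρr : 0 < ρr) (hlam : 0 < lam)
    (Et Er St Sr Prx g : ℝ)
    (hEt : 0 ≤ Et) (hEr : 0 ≤ Er) (hSt : 0 ≤ St) (hSr : 0 ≤ Sr)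
    (hPrx : 0 ≤ Prx) (hg : 0 ≤ g)
    (h1 : St = Ptx * Dtx / (4 * Real.pi * ρt ^ 2))
    (h2 : St = Et ^ 2 / (2 * η))
    (h3 : Er ^ 2 = (g ^ 2 / (4 * Real.pi * ρr ^ 2)) * Et ^ 2)
    (h4 : Sr = Er ^ 2 / (2 * η))
    (h5 : Prx = Sr * Drx * lam ^ 2 / (4 * Real.pi)) :
    Prx / Ptx = Dtx * Drx * (4 * Real.pi * g ^ 2 / lam ^ 2) *
      (lam / (4 * Real.pi * ρt)) ^ 2 * (lam / (4 * Real.pi * ρr)) ^ 2 := by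
  have hπ := Real.pi_pos
  have hEt2 : Et ^ 2 = 2 * η * St := by
    rw [h2]; field_simp
  subst h5 h4 h1
  rw [h3, hEt2]
  field_simp
end

section
/- Let θ_t ∈ [0, π/2), and let φ_t, ϕ, θ_r, φ_r be real numbers. Define c = cos(θ_t)/√((cos(ϕ)·sin(θ_t)·cos(φ_t) + sin(ϕ)·sin(θ_t)·sin(φ_t))² + cos²(θ_t)) and g̃ = c·√((cos(ϕ)·cos(θ_r)·sin(φ_r) - sin(ϕ)·cos(θ_r)·cos(φ_r))² + (sin(ϕ)·sin(φ_r) + cos(ϕ)·cos(φ_r))²). Then 0 ≤ g̃ ≤ 1, and if θ_t = 0 and θ_r = 0 then g̃ = 1. Consequently, for every λ > 0, L_x > 0, L_y > 0, and τ ∈ (0,1], the matched-angle tile response magnitude (√(4π)·τ·L_x·L_y/λ)·g̃ is at most √(4π)·L_x·L_y/λ, with equality when τ = 1, θ_t = 0, and θ_r = 0. -/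
/-- Corollary 1: `0 ≤ g̃ ≤ 1`, with `g̃ = 1` for normal incidence and reflection;
consequently the matched-angle tile response magnitude `(√(4π)τL_xL_y/λ)·g̃` is at
most `√(4π)L_xL_y/λ`, with equality when `τ = 1`, `θ_t = 0`, `θ_r = 0`. -/
theorem max_continuous_tile_response
    (θt φt ϕ θr φr : ℝ) (hθ1 : 0 ≤ θt) (hθ2 : θt < Real.pi / 2)
    (c gt : ℝ)
    (hc : c = Real.cos θt / Real.sqrt
        ((Real.cos ϕ * Real.sin θt * Real.cos φt
            + Real.sin ϕ * Real.sin θt * Real.sin φt) ^ 2 + (Real.cos θt) ^ 2))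
    (hgt : gt = c * Real.sqrt
        ((Real.cos ϕ * Real.cos θr * Real.sin φr
            - Real.sin ϕ * Real.cos θr * Real.cos φr) ^ 2
          + (Real.sin ϕ * Real.sin φr + Real.cos ϕ * Real.cos φr) ^ 2)) :
    (0 ≤ gt ∧ gt ≤ 1)
    ∧ (θt = 0 → θr = 0 → gt = 1)
    ∧ ∀ lam Lx Ly τ : ℝ, 0 < lam → 0 < Lx → 0 < Ly → 0 < τ → τ ≤ 1 →
        (Real.sqrt (4 * Real.pi) * τ * Lx * Ly / lam) * gt
          ≤ Real.sqrt (4 * Real.pi) * Lx * Ly / lam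
        ∧ (τ = 1 → θt = 0 → θr = 0 →
            (Real.sqrt (4 * Real.pi) * τ * Lx * Ly / lam) * gt
              = Real.sqrt (4 * Real.pi) * Lx * Ly / lam) := by
  have hcos : 0 < Real.cos θt := Real.cos_pos_of_mem_Ioo ⟨by linarith [Real.pi_pos], hθ2⟩
  set X := Real.cos ϕ * Real.sin θt * Real.cos φt + Real.sin ϕ * Real.sin θt * Real.sin φt
  set E := (Real.cos ϕ * Real.cos θr * Real.sin φr
            - Real.sin ϕ * Real.cos θr * Real.cos φr) ^ 2
          + (Real.sin ϕ * Real.sin φr + Real.cos ϕ * Real.cos φr) ^ 2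
  have hE0 : 0 ≤ E := by positivity
  have hE1 : E ≤ 1 := by
    have h1 := Real.sin_sq_add_cos_sq ϕ
    have h2 := Real.sin_sq_add_cos_sq φr
    have h3 : Real.cos θr ^ 2 ≤ 1 := by
      nlinarith [Real.neg_one_le_cos θr, Real.cos_le_one θr]
    have h4 : 0 ≤ (1 - Real.cos θr ^ 2) *
        (Real.cos ϕ * Real.sin φr - Real.sin ϕ * Real.cos φr) ^ 2 :=
      mul_nonneg (by linarith) (sq_nonneg _)
    simp only [E]
    nlinarith [h4]
  have hS1 : Real.sqrt E ≤ 1 := by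
    rw [show (1:ℝ) = Real.sqrt 1 by simp]
    exact Real.sqrt_le_sqrt hE1
  have hS0 : 0 ≤ Real.sqrt E := Real.sqrt_nonneg _
  have hDge : Real.cos θt ≤ Real.sqrt (X ^ 2 + Real.cos θt ^ 2) := by
    have := Real.sqrt_le_sqrt (show Real.cos θt ^ 2 ≤ X ^ 2 + Real.cos θt ^ 2 by nlinarith [sq_nonneg X])
    rwa [Real.sqrt_sq hcos.le] at this
  have hDpos : 0 < Real.sqrt (X ^ 2 + Real.cos θt ^ 2) := lt_of_lt_of_le hcos hDge
  have hc0 : 0 ≤ c := by rw [hc]; positivity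
  have hc1 : c ≤ 1 := by
    rw [hc, div_le_one hDpos]; exact hDge
  have hgt0 : 0 ≤ gt := by rw [hgt]; positivity
  have hgt1 : gt ≤ 1 := by
    rw [hgt]
    calc c * Real.sqrt E ≤ 1 * 1 :=
          mul_le_mul hc1 hS1 hS0 zero_le_one
      _ = 1 := by ring
  have heq : θt = 0 → θr = 0 → gt = 1 := by
    intro ht hr
    subst ht hr
    have hc' : c = 1 := by
      rw [hc]; simp [X]
    have hE' : E = 1 := by
      simp only [E, Real.cos_zero]
      nlinarith [Real.sin_sq_add_cos_sq ϕ, Real.sin_sq_add_cos_sq φr]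
    rw [hgt, hc', hE', Real.sqrt_one]; ring
  refine ⟨⟨hgt0, hgt1⟩, heq, ?_⟩
  intro lam Lx Ly τ hlam hLx hLy hτ0 hτ1
  have hK : 0 ≤ Real.sqrt (4 * Real.pi) * Lx * Ly / lam := by positivity
  constructor
  · have hτg : τ * gt ≤ 1 := by nlinarith
    calc (Real.sqrt (4 * Real.pi) * τ * Lx * Ly / lam) * gt
        = (Real.sqrt (4 * Real.pi) * Lx * Ly / lam) * (τ * gt) := by ring
      _ ≤ (Real.sqrt (4 * Real.pi) * Lx * Ly / lam) * 1 := by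
          exact mul_le_mul_of_nonneg_left hτg hK
      _ = Real.sqrt (4 * Real.pi) * Lx * Ly / lam := by ring
  · intro hτ ht hr
    rw [hτ, heq ht hr]; ring
end

section
/- Let λ, ρ_d, ρ_t, ρ_r, A be positive real numbers. Define the free-space path-loss of the IRS-assisted link with the maximal IRS response g = √(4π)·A/λ as PL_IRS = (4π·g²/λ²)·(λ/(4π·ρ_t))²·(λ/(4π·ρ_r))², and the free-space path-loss of the direct link as PL_d = (λ/(4π·ρ_d))². Then PL_IRS = PL_d if and only if A = λ·ρ_t·ρ_r/ρ_d, and PL_IRS ≥ PL_d if and only if A ≥ λ·ρ_t·ρ_r/ρ_d. -/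
/-- Corollary 2: with the maximal IRS response `g = √(4π)·A/λ`, the IRS-assisted
path-loss equals (resp. exceeds) the direct-link path-loss iff
`A = λρ_tρ_r/ρ_d` (resp. `A ≥ λρ_tρ_r/ρ_d`). -/
theorem min_irs_area
    (lam ρd ρt ρr A : ℝ)
    (hlam : 0 < lam) (hρd : 0 < ρd) (hρt : 0 < ρt) (hρr : 0 < ρr) (hA : 0 < A)
    (g PLirs PLd : ℝ)
    (hg : g = Real.sqrt (4 * Real.pi) * A / lam)
    (hPLirs : PLirs = (4 * Real.pi * g ^ 2 / lam ^ 2) *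
        (lam / (4 * Real.pi * ρt)) ^ 2 * (lam / (4 * Real.pi * ρr)) ^ 2)
    (hPLd : PLd = (lam / (4 * Real.pi * ρd)) ^ 2) :
    (PLirs = PLd ↔ A = lam * ρt * ρr / ρd)
    ∧ (PLirs ≥ PLd ↔ A ≥ lam * ρt * ρr / ρd) := by
  have hpi : (0:ℝ) < Real.pi := Real.pi_pos
  have hsq : Real.sqrt (4 * Real.pi) ^ 2 = 4 * Real.pi :=
    Real.sq_sqrt (by positivity)
  have hPL : PLirs = (A / (4 * Real.pi * ρt * ρr)) ^ 2 := by
    subst hg hPLirs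
    have h4 : Real.sqrt 4 ^ 2 = 4 := Real.sq_sqrt (by norm_num)
    have hp : Real.sqrt Real.pi ^ 2 = Real.pi := Real.sq_sqrt hpi.le
    field_simp
    ring_nf
    exact Real.sq_sqrt (by positivity)
  have hb1 : (0:ℝ) ≤ A / (4 * Real.pi * ρt * ρr) := by positivity
  have hb2 : (0:ℝ) ≤ lam / (4 * Real.pi * ρd) := by positivity
  have key : A / (4 * Real.pi * ρt * ρr) = lam / (4 * Real.pi * ρd) ↔
      A = lam * ρt * ρr / ρd := by
    rw [div_eq_div_iff (by positivity) (by positivity),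
      eq_div_iff (ne_of_gt hρd)]
    constructor <;> intro h <;> nlinarith
  have keyle : lam / (4 * Real.pi * ρd) ≤ A / (4 * Real.pi * ρt * ρr) ↔
      lam * ρt * ρr / ρd ≤ A := by
    rw [div_le_div_iff₀ (by positivity) (by positivity),
      div_le_iff₀ (hρd)]
    constructor <;> intro h <;> nlinarith
  constructor
  · rw [hPL, hPLd, sq_eq_sq₀ hb1 hb2, key]
  · rw [hPL, hPLd, ge_iff_le, pow_le_pow_iff_left₀ hb2 hb1 two_ne_zero, keyle, ge_iff_le]
end

section
/- Let λ, ρ_d, ρ_t, ρ_r, L_uc be positive real numbers and Q > 0. Define the free-space path-loss of the IRS-assisted link with the maximal discrete-IRS response g = √(4π)·L_uc²·Q/λ as PL_IRS = (4π·g²/λ²)·(λ/(4π·ρ_t))²·(λ/(4π·ρ_r))², and the free-space path-loss of the direct link as PL_d = (λ/(4π·ρ_d))². Then PL_IRS = PL_d if and only if Q = λ·ρ_t·ρ_r/(L_uc²·ρ_d); moreover, if L_uc = λ/2, this condition is Q = 4·ρ_t·ρ_r/(λ·ρ_d). -/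
/-- Corollary 4: with the maximal discrete-IRS response `g = √(4π)·L_uc²·Q/λ`,
`PL_IRS = PL_d` iff `Q = λρ_tρ_r/(L_uc²ρ_d)`; for `L_uc = λ/2` this reads
`Q = 4ρ_tρ_r/(λρ_d)`. -/
theorem min_number_unit_cells
    (lam ρd ρt ρr Luc Q : ℝ)
    (hlam : 0 < lam) (hρd : 0 < ρd) (hρt : 0 < ρt) (hρr : 0 < ρr)
    (hLuc : 0 < Luc) (hQ : 0 < Q)
    (g PLirs PLd : ℝ)
    (hg : g = Real.sqrt (4 * Real.pi) * Luc ^ 2 * Q / lam)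
    (hPLirs : PLirs = (4 * Real.pi * g ^ 2 / lam ^ 2) *
        (lam / (4 * Real.pi * ρt)) ^ 2 * (lam / (4 * Real.pi * ρr)) ^ 2)
    (hPLd : PLd = (lam / (4 * Real.pi * ρd)) ^ 2) :
    (PLirs = PLd ↔ Q = lam * ρt * ρr / (Luc ^ 2 * ρd))
    ∧ (Luc = lam / 2 → (PLirs = PLd ↔ Q = 4 * ρt * ρr / (lam * ρd))) := by
  have hπ := Real.pi_pos
  have h4π : (0:ℝ) < 4 * Real.pi := by positivity
  have hg2 : g ^ 2 = 4 * Real.pi * Luc ^ 4 * Q ^ 2 / lam ^ 2 := by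
    rw [hg, div_pow, mul_pow, mul_pow, Real.sq_sqrt h4π.le]; ring
  set C := lam * ρt * ρr / (Luc ^ 2 * ρd) with hC
  have hCpos : 0 < C := by positivity
  have key : PLirs = PLd ↔ Q = C := by
    have hsq : Q ^ 2 = C ^ 2 ↔ Q = C := by
      constructor
      · intro h; nlinarith
      · intro h; rw [h]
    rw [← hsq, hPLirs, hPLd, hg2, hC]
    constructor <;> intro h <;> field_simp at h ⊢
    · exact mul_left_cancel₀ (show (256*Real.pi^4*lam^4:ℝ) ≠ 0 by positivity)
        (show (256*Real.pi^4*lam^4) * (Luc ^ 4 * Q ^ 2 * ρd ^ 2)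
            = (256*Real.pi^4*lam^4) * (lam ^ 2 * ρt ^ 2 * ρr ^ 2) by linear_combination (256*Real.pi^4*lam^4) * h)
    · linear_combination h
  refine ⟨key, fun hL => ?_⟩
  rw [key, hC, hL]
  constructor <;> intro h <;> (rw [h]; field_simp; ring)
end

section
/- Let N_t ≥ 1 and let K be a finite nonempty set. For each k ∈ K let h_k ∈ ℂ^{N_t} be a vector, γ_k > 0, and let σ² > 0. Define the feasible set F as the set of families (Q_k)_{k∈K} of N_t × N_t complex matrices such that each Q_k is Hermitian positive semidefinite and for each k ∈ K the real number h_k^H Q_k h_k - γ_k·∑_{k'≠k} h_k^H Q_{k'} h_k is at least γ_k·σ². Suppose F is nonempty. Then the infimum over F of the objective ∑_{k∈K} tr(Q_k) is attained, and moreover it is attained by some family (Q_k*)_{k∈K} ∈ F in which every matrix Q_k* has rank exactly one. -/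
open Finset Matrix
open scoped ComplexOrder

set_option linter.unusedSectionVars false
set_option maxHeartbeats 1000000

section Aux
variable {n : Type*} [Fintype n] [DecidableEq n]

open scoped MatrixOrder in
lemma psd_exists_ctm {A : Matrix n n ℂ} (hA : A.PosSemidef) : ∃ B : Matrix n n ℂ, A = Bᴴ * B := by
  obtain ⟨X, hX, -, hXA⟩ :=
    CFC.exists_sqrt_of_isSelfAdjoint_of_quasispectrumRestricts hA.isHermitian
      (QuasispectrumRestricts.nnreal_of_nonneg hA.nonneg)
  exact ⟨X, by rw [← hXA]; exact congrArg (· * X) hX.star_eq.symm⟩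

/-- Cauchy-Schwarz for the complex dot product. -/
lemma cs_dot (a b : n → ℂ) :
    ‖star a ⬝ᵥ b‖ ^ 2 ≤ (∑ i, ‖a i‖ ^ 2) * (∑ i, ‖b i‖ ^ 2) := by
  let a' : EuclideanSpace ℂ n := (WithLp.equiv 2 _).symm a
  let b' : EuclideanSpace ℂ n := (WithLp.equiv 2 _).symm b
  have hinner : (inner ℂ a' b' : ℂ) = star a ⬝ᵥ b := by
    simp [a', b', PiLp.inner_apply, dotProduct, RCLike.inner_apply, mul_comm]
  have h1 : ‖(inner ℂ a' b' : ℂ)‖ ≤ ‖a'‖ * ‖b'‖ := norm_inner_le_norm a' b'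
  have hna : ‖a'‖ ^ 2 = ∑ i, ‖a i‖ ^ 2 := by
    rw [EuclideanSpace.norm_eq, Real.sq_sqrt (by positivity)]
    rfl
  have hnb : ‖b'‖ ^ 2 = ∑ i, ‖b i‖ ^ 2 := by
    rw [EuclideanSpace.norm_eq, Real.sq_sqrt (by positivity)]
    rfl
  calc ‖star a ⬝ᵥ b‖ ^ 2 = ‖(inner ℂ a' b' : ℂ)‖ ^ 2 := by rw [hinner]
    _ ≤ (‖a'‖ * ‖b'‖) ^ 2 := by
        have := norm_nonneg (inner ℂ a' b' : ℂ)
        nlinarith [norm_nonneg a', norm_nonneg b']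
    _ = (∑ i, ‖a i‖ ^ 2) * (∑ i, ‖b i‖ ^ 2) := by rw [mul_pow, hna, hnb]

lemma re_dot_self (a : n → ℂ) : (star a ⬝ᵥ a).re = ∑ i, ‖a i‖ ^ 2 := by
  simp [dotProduct, Complex.re_sum, Complex.normSq_apply, Complex.sq_norm,
    ← Complex.normSq_eq_norm_sq, Complex.normSq_apply, Complex.mul_re]

lemma factor_quadform (B : Matrix n n ℂ) (x y : n → ℂ) :
    star x ⬝ᵥ (Bᴴ * B) *ᵥ y = star (B *ᵥ x) ⬝ᵥ (B *ᵥ y) := by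
  rw [star_mulVec, ← mulVec_mulVec, dotProduct_mulVec]

lemma vecMulVec_mulVec' (v w x : n → ℂ) :
    vecMulVec v w *ᵥ x = (w ⬝ᵥ x) • v := by
  funext i
  simp [vecMulVec, mulVec, dotProduct, Finset.mul_sum, mul_comm, mul_assoc, mul_left_comm]

lemma quad_vecMulVec (v x : n → ℂ) :
    star x ⬝ᵥ vecMulVec v (star v) *ᵥ x = (‖star v ⬝ᵥ x‖ ^ 2 : ℝ) := by
  rw [vecMulVec_mulVec', dotProduct_smul]
  have h1 : star x ⬝ᵥ v = star (star v ⬝ᵥ x) := star_dotProduct _ _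
  rw [smul_eq_mul, h1, mul_comm]
  simpa using RCLike.conj_mul (star v ⬝ᵥ x)

lemma dot_self_real (A : Matrix n n ℂ) (hA : A.PosSemidef) (x : n → ℂ) :
    star x ⬝ᵥ A *ᵥ x = ((star x ⬝ᵥ A *ᵥ x).re : ℂ) := by
  have h0 := hA.dotProduct_mulVec_nonneg x
  rw [Complex.le_def] at h0
  apply Complex.ext <;> simp [h0.2.symm]

lemma quad_repl (c : ℝ) (v x : n → ℂ) :
    (star x ⬝ᵥ (((c : ℂ))⁻¹ • vecMulVec v (star v)) *ᵥ x).re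
      = c⁻¹ * ‖star v ⬝ᵥ x‖ ^ 2 := by
  rw [smul_mulVec, dotProduct_smul, smul_eq_mul, ← Complex.ofReal_inv,
    quad_vecMulVec, ← Complex.ofReal_mul, Complex.ofReal_re]

/-- Main rank-one reduction lemma. -/
lemma rankone_reduce (A : Matrix n n ℂ) (hA : A.PosSemidef) (h0 : n → ℂ)
    (hc : 0 < (star h0 ⬝ᵥ A *ᵥ h0).re) :
    ∃ A' : Matrix n n ℂ, A'.PosSemidef
      ∧ (star h0 ⬝ᵥ A' *ᵥ h0).re = (star h0 ⬝ᵥ A *ᵥ h0).re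
      ∧ (∀ x, (star x ⬝ᵥ A' *ᵥ x).re ≤ (star x ⬝ᵥ A *ᵥ x).re)
      ∧ A'.trace.re ≤ A.trace.re
      ∧ A'.rank = 1 := by
  obtain ⟨c, hcdef⟩ : ∃ c : ℝ, (star h0 ⬝ᵥ A *ᵥ h0).re = c := ⟨_, rfl⟩
  obtain ⟨v, hvdef⟩ : ∃ v : n → ℂ, A *ᵥ h0 = v := ⟨_, rfl⟩
  obtain ⟨B, hB⟩ := psd_exists_ctm hA
  rw [hcdef] at hc
  have hcC : star h0 ⬝ᵥ A *ᵥ h0 = (c : ℂ) := by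
    rw [dot_self_real A hA h0, hcdef]
  have hsvh : star v ⬝ᵥ h0 = (c : ℂ) := by
    rw [← hvdef, star_mulVec, hA.isHermitian.eq, ← dotProduct_mulVec, hcC]
  have hveq : ∀ x : n → ℂ, star v ⬝ᵥ x = star (B *ᵥ h0) ⬝ᵥ (B *ᵥ x) := by
    intro x
    rw [← hvdef, star_mulVec, hA.isHermitian.eq, ← dotProduct_mulVec, hB, factor_quadform]
  have hBh0 : ∑ i, ‖(B *ᵥ h0) i‖ ^ 2 = c := by
    rw [← re_dot_self, ← factor_quadform, ← hB, hcdef]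
  have hquadA : ∀ x : n → ℂ, (star x ⬝ᵥ A *ᵥ x).re = ∑ i, ‖(B *ᵥ x) i‖ ^ 2 := by
    intro x
    rw [hB, factor_quadform, re_dot_self]
  have hCS : ∀ x : n → ℂ, ‖star v ⬝ᵥ x‖ ^ 2 ≤ c * (star x ⬝ᵥ A *ᵥ x).re := by
    intro x
    rw [hveq x, hquadA x]
    calc ‖star (B *ᵥ h0) ⬝ᵥ (B *ᵥ x)‖ ^ 2
        ≤ (∑ i, ‖(B *ᵥ h0) i‖ ^ 2) * (∑ i, ‖(B *ᵥ x) i‖ ^ 2) := cs_dot _ _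
      _ = c * (∑ i, ‖(B *ᵥ x) i‖ ^ 2) := by rw [hBh0]
  refine ⟨((c : ℂ))⁻¹ • vecMulVec v (star v), ?_, ?_, ?_, ?_, ?_⟩
  · -- PSD
    refine PosSemidef.of_dotProduct_mulVec_nonneg ?_ ?_
    · show _ = _
      ext i j
      simp only [conjTranspose_apply, Matrix.smul_apply, vecMulVec_apply, Pi.star_apply,
        smul_eq_mul, Complex.star_def, _root_.map_mul, map_inv₀, Complex.conj_ofReal,
        Complex.conj_conj]
      ring
    · intro x
      rw [smul_mulVec, dotProduct_smul, smul_eq_mul, quad_vecMulVec,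
        ← Complex.ofReal_inv, ← Complex.ofReal_mul, Complex.zero_le_real]
      positivity
  · -- signal preserved
    rw [quad_repl, hsvh, hcdef]
    rw [Complex.norm_real]
    rw [Real.norm_eq_abs, abs_of_pos hc, sq]
    field_simp
  · -- quadratic form dominated
    intro x
    rw [quad_repl, inv_mul_le_iff₀ hc]
    exact hCS x
  · -- trace
    have htr : (((c : ℂ))⁻¹ • vecMulVec v (star v)).trace.re = c⁻¹ * ∑ i, ‖v i‖ ^ 2 := by
      rw [trace_smul, smul_eq_mul, ← Complex.ofReal_inv]
      have h2 : (vecMulVec v (star v)).trace = ((∑ i, ‖v i‖ ^ 2 : ℝ) : ℂ) := by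
        rw [Matrix.trace]
        push_cast
        refine Finset.sum_congr rfl fun i _ => ?_
        simp only [Matrix.diag_apply, vecMulVec_apply, Pi.star_apply]
        simpa using RCLike.mul_conj (v i)
      rw [h2, ← Complex.ofReal_mul, Complex.ofReal_re]
    rw [htr]
    have hAtr : A.trace.re = ∑ j, ∑ i, ‖B i j‖ ^ 2 := by
      rw [Matrix.trace, Complex.re_sum]
      refine Finset.sum_congr rfl fun j _ => ?_
      have h3 : A.diag j = star (fun l => B l j) ⬝ᵥ (fun l => B l j) := by
        rw [hB]
        simp [Matrix.mul_apply, dotProduct, conjTranspose_apply, Matrix.diag_apply]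
      rw [h3, re_dot_self]
    have hvb : ∑ j, ‖v j‖ ^ 2 ≤ A.trace.re * c := by
      rw [hAtr, Finset.sum_mul]
      refine Finset.sum_le_sum fun j _ => ?_
      have hvj : v j = star (fun l => B l j) ⬝ᵥ (B *ᵥ h0) := by
        rw [← hvdef, hB, ← mulVec_mulVec]
        simp [mulVec, dotProduct, conjTranspose_apply]
      rw [hvj]
      calc ‖star (fun l => B l j) ⬝ᵥ (B *ᵥ h0)‖ ^ 2
          ≤ (∑ l, ‖B l j‖ ^ 2) * (∑ l, ‖(B *ᵥ h0) l‖ ^ 2) := cs_dot _ _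
        _ = (∑ l, ‖B l j‖ ^ 2) * c := by rw [hBh0]
    calc c⁻¹ * ∑ i, ‖v i‖ ^ 2 ≤ c⁻¹ * (A.trace.re * c) :=
          mul_le_mul_of_nonneg_left hvb (by positivity)
      _ = A.trace.re := by field_simp
  · -- rank
    have hvne : v ≠ 0 := by
      intro hv0
      rw [hv0] at hsvh
      simp only [star_zero, zero_dotProduct] at hsvh
      exact hc.ne' (by exact_mod_cast hsvh.symm)
    have hwne : ((c : ℂ))⁻¹ • v ≠ 0 := by
      simp only [ne_eq, smul_eq_zero, inv_eq_zero, Complex.ofReal_eq_zero, not_or]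
      exact ⟨hc.ne', hvne⟩
    have hA'eq : ((c : ℂ))⁻¹ • vecMulVec v (star v) = vecMulVec (((c : ℂ))⁻¹ • v) (star v) := by
      ext i j
      simp only [Matrix.smul_apply, vecMulVec_apply, Pi.smul_apply, smul_eq_mul]
      ring
    rw [hA'eq]
    have hle : (vecMulVec (((c : ℂ))⁻¹ • v) (star v)).rank ≤ 1 := by
      rw [vecMulVec_eq (Fin 1)]
      refine le_trans (Matrix.rank_mul_le_left _ _) ?_
      exact (Matrix.rank_le_card_width (replicateCol (Fin 1) (((c : ℂ))⁻¹ • v))).trans (by simp)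
    have hge : 0 < (vecMulVec (((c : ℂ))⁻¹ • v) (star v)).rank := by
      rw [Matrix.rank, Module.finrank_pos_iff_exists_ne_zero]
      refine ⟨⟨(vecMulVec (((c : ℂ))⁻¹ • v) (star v)).mulVecLin v,
        LinearMap.mem_range_self _ _⟩, ?_⟩
      simp only [ne_eq, Submodule.mk_eq_zero, mulVecLin_apply]
      rw [vecMulVec_mulVec']
      refine smul_ne_zero ?_ hwne
      intro h0'
      apply hvne
      have h4 : (star v ⬝ᵥ v).re = 0 := by rw [h0', Complex.zero_re]
      rw [re_dot_self] at h4
      funext i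
      have hi : ‖v i‖ ^ 2 = 0 :=
        (Finset.sum_eq_zero_iff_of_nonneg (fun i _ => by positivity)).mp h4 i (Finset.mem_univ i)
      simpa using pow_eq_zero_iff (n := 2) (by norm_num) |>.mp hi
    omega

section Aux2
variable {n : Type*} [Fintype n] [DecidableEq n]




lemma cont_qf (x : n → ℂ) :
    Continuous fun M : Matrix n n ℂ => (star x ⬝ᵥ M *ᵥ x).re :=
  Complex.continuous_re.comp
    (continuous_const.dotProduct (continuous_id.matrix_mulVec continuous_const))

lemma psd_iff_re (M : Matrix n n ℂ) :
    M.PosSemidef ↔ Mᴴ = M ∧ ∀ x, 0 ≤ (star x ⬝ᵥ M *ᵥ x).re := by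
  constructor
  · intro hM
    refine ⟨hM.isHermitian.eq, fun x => ?_⟩
    have := (Complex.le_def.mp (hM.dotProduct_mulVec_nonneg x)).1
    simpa using this
  · rintro ⟨hherm, hre⟩
    refine PosSemidef.of_dotProduct_mulVec_nonneg hherm fun x => ?_
    have hsz : star (star x ⬝ᵥ M *ᵥ x) = star x ⬝ᵥ M *ᵥ x := by
      rw [← star_dotProduct, star_mulVec, hherm, ← dotProduct_mulVec]
    rw [Complex.le_def]
    refine ⟨by simpa using hre x, ?_⟩
    have := congrArg Complex.im hsz
    simp only [Complex.star_def, Complex.conj_im] at this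
    simp only [Complex.zero_im]
    linarith

lemma isClosed_psd : IsClosed {M : Matrix n n ℂ | M.PosSemidef} := by
  have heq : {M : Matrix n n ℂ | M.PosSemidef}
      = {M : Matrix n n ℂ | Mᴴ = M} ∩ ⋂ x : n → ℂ, {M | 0 ≤ (star x ⬝ᵥ M *ᵥ x).re} := by
    ext M
    simp [psd_iff_re, Set.mem_iInter]
  rw [heq]
  refine IsClosed.inter ?_ (isClosed_iInter fun x => isClosed_le continuous_const (cont_qf x))
  exact isClosed_eq (continuous_id.matrix_conjTranspose) continuous_id

lemma psd_trace_re_nonneg {M : Matrix n n ℂ} (hM : M.PosSemidef) : 0 ≤ M.trace.re := by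
  obtain ⟨B, rfl⟩ := psd_exists_ctm hM
  rw [Matrix.trace, Complex.re_sum]
  refine Finset.sum_nonneg fun j _ => ?_
  have h3 : (Bᴴ * B).diag j = star (fun l => B l j) ⬝ᵥ (fun l => B l j) := by
    simp [Matrix.mul_apply, dotProduct, conjTranspose_apply, Matrix.diag_apply]
  rw [h3, re_dot_self]
  positivity

lemma psd_entry_bound {M : Matrix n n ℂ} (hM : M.PosSemidef) (i j : n) :
    ‖M i j‖ ≤ M.trace.re := by
  obtain ⟨B, rfl⟩ := psd_exists_ctm hM
  set T := (Bᴴ * B).trace.re with hT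
  have hTeq : T = ∑ j, ∑ l, ‖B l j‖ ^ 2 := by
    rw [hT, Matrix.trace, Complex.re_sum]
    refine Finset.sum_congr rfl fun j _ => ?_
    have h3 : (Bᴴ * B).diag j = star (fun l => B l j) ⬝ᵥ (fun l => B l j) := by
      simp [Matrix.mul_apply, dotProduct, conjTranspose_apply, Matrix.diag_apply]
    rw [h3, re_dot_self]
  have hcol : ∀ i, ∑ l, ‖B l i‖ ^ 2 ≤ T := by
    intro i
    rw [hTeq]
    exact Finset.single_le_sum (f := fun j => ∑ l, ‖B l j‖ ^ 2)
      (fun j _ => by positivity) (Finset.mem_univ i)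
  have hentry : (Bᴴ * B) i j = star (fun l => B l i) ⬝ᵥ (fun l => B l j) := by
    simp [Matrix.mul_apply, dotProduct, conjTranspose_apply]
  have hcs : ‖(Bᴴ * B) i j‖ ^ 2 ≤ (∑ l, ‖B l i‖ ^ 2) * (∑ l, ‖B l j‖ ^ 2) := by
    rw [hentry]
    exact cs_dot _ _
  have hTnn : 0 ≤ T := psd_trace_re_nonneg hM
  have h1 : (∑ l, ‖B l i‖ ^ 2) * (∑ l, ‖B l j‖ ^ 2) ≤ T * T := by
    have a1 : (0:ℝ) ≤ ∑ l, ‖B l i‖ ^ 2 := by positivity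
    have a2 : (0:ℝ) ≤ ∑ l, ‖B l j‖ ^ 2 := by positivity
    exact mul_le_mul (hcol i) (hcol j) a2 hTnn
  nlinarith [norm_nonneg ((Bᴴ * B) i j)]

end Aux2
end Aux

/-- Lemma 3: in the semidefinite relaxation P2 of the downlink power
minimization problem, if the feasible set is nonempty then the infimum of the
total transmit power `∑_k tr(Q_k)` is attained, and it is attained by a family
in which every matrix has rank exactly one. -/
theorem sdp_rank_one_solution
    {ι : Type*} [Fintype ι] [Nonempty ι] [DecidableEq ι]
    (Nt : ℕ) (hNt : 1 ≤ Nt)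
    (h : ι → (Fin Nt → ℂ))
    (γ : ι → ℝ) (hγ : ∀ k, 0 < γ k) (σ2 : ℝ) (hσ : 0 < σ2)
    (F : Set (ι → Matrix (Fin Nt) (Fin Nt) ℂ))
    (hF : F = {Q | (∀ k, (Q k).PosSemidef) ∧ ∀ k,
        (star (h k) ⬝ᵥ (Q k) *ᵥ (h k)).re
          - γ k * ∑ k' ∈ univ.erase k, (star (h k) ⬝ᵥ (Q k') *ᵥ (h k)).re
          ≥ γ k * σ2})
    (hne : F.Nonempty) :
    ∃ Qs ∈ F, (∀ Q ∈ F, ∑ k, ((Qs k).trace).re ≤ ∑ k, ((Q k).trace).re)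
      ∧ ∀ k, (Qs k).rank = 1 := by
  classical
  obtain ⟨Q0, hQ0⟩ := hne
  have hobjcont : Continuous fun Q : ι → Matrix (Fin Nt) (Fin Nt) ℂ =>
      ∑ k, ((Q k).trace).re := by
    refine continuous_finset_sum _ fun k _ => ?_
    exact Complex.continuous_re.comp ((continuous_apply k).matrix_trace)
  -- F is closed
  have hFclosed : IsClosed F := by
    have hFeq : F = (⋂ k, (fun Q : ι → Matrix (Fin Nt) (Fin Nt) ℂ => Q k) ⁻¹'
          {M | M.PosSemidef})
        ∩ ⋂ k, {Q : ι → Matrix (Fin Nt) (Fin Nt) ℂ | γ k * σ2 ≤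
            (star (h k) ⬝ᵥ (Q k) *ᵥ (h k)).re
            - γ k * ∑ k' ∈ univ.erase k, (star (h k) ⬝ᵥ (Q k') *ᵥ (h k)).re} := by
      rw [hF]
      ext Q
      simp only [Set.mem_setOf_eq, Set.mem_inter_iff, Set.mem_iInter, Set.mem_preimage,
        ge_iff_le]
    rw [hFeq]
    refine IsClosed.inter (isClosed_iInter fun k => isClosed_psd.preimage (continuous_apply k))
      (isClosed_iInter fun k => isClosed_le continuous_const ?_)
    refine Continuous.sub ((cont_qf (h k)).comp (continuous_apply k))
      (continuous_const.mul (continuous_finset_sum _ fun k' _ =>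
        (cont_qf (h k)).comp (continuous_apply k')))
  set c0 : ℝ := ∑ k, ((Q0 k).trace).re with hc0
  -- the compact box
  have hK : IsCompact {Q : ι → Matrix (Fin Nt) (Fin Nt) ℂ | ∀ k, ∀ i j, ‖Q k i j‖ ≤ c0} := by
    have key : IsCompact {Q : ι → Fin Nt → Fin Nt → ℂ | ∀ k, ∀ i j, ‖Q k i j‖ ≤ c0} := by
      have heq : {Q : ι → Fin Nt → Fin Nt → ℂ | ∀ k, ∀ i j, ‖Q k i j‖ ≤ c0}
          = Set.univ.pi (fun _ : ι => Set.univ.pi (fun _ : Fin Nt =>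
              Set.univ.pi fun _ : Fin Nt => Metric.closedBall (0 : ℂ) c0)) := by
        ext Q
        simp [Set.mem_univ_pi, Metric.mem_closedBall, dist_zero_right]
      rw [heq]
      exact isCompact_univ_pi fun _ => isCompact_univ_pi fun _ =>
        isCompact_univ_pi fun _ => isCompact_closedBall _ _
    exact key
  -- the compact sublevel feasible set
  set S : Set (ι → Matrix (Fin Nt) (Fin Nt) ℂ) :=
    F ∩ {Q | ∑ k, ((Q k).trace).re ≤ c0} with hSdef
  have hS0 : Q0 ∈ S := ⟨hQ0, hc0.ge⟩
  have hSclosed : IsClosed S := hFclosed.inter (isClosed_le hobjcont continuous_const)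
  have hSsub : S ⊆ {Q : ι → Matrix (Fin Nt) (Fin Nt) ℂ | ∀ k, ∀ i j, ‖Q k i j‖ ≤ c0} := by
    rintro Q ⟨hQF, hQle⟩ k i j
    rw [hF] at hQF
    have hpsd := hQF.1
    calc ‖Q k i j‖ ≤ (Q k).trace.re := psd_entry_bound (hpsd k) i j
      _ ≤ ∑ k', ((Q k').trace).re :=
          Finset.single_le_sum (fun k' _ => psd_trace_re_nonneg (hpsd k')) (Finset.mem_univ k)
      _ ≤ c0 := hQle
  have hScompact : IsCompact S := hK.of_isClosed_subset hSclosed hSsub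
  obtain ⟨Qm, hQmS, hQmmin⟩ := hScompact.exists_isMinOn ⟨Q0, hS0⟩ hobjcont.continuousOn
  -- Qm minimizes over all of F
  have hminF : ∀ Q ∈ F, ∑ k, ((Qm k).trace).re ≤ ∑ k, ((Q k).trace).re := by
    intro Q hQ
    by_cases hle : ∑ k, ((Q k).trace).re ≤ c0
    · exact hQmmin ⟨hQ, hle⟩
    · push_neg at hle
      have h2 : ∑ k, ((Qm k).trace).re ≤ c0 := hQmmin hS0
      linarith
  -- feasibility data of Qm
  have hQmF : Qm ∈ F := hQmS.1
  have hQmF' := hQmF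
  rw [hF] at hQmF'
  obtain ⟨hQm1, hQm2⟩ := hQmF'
  have hint : ∀ k k', 0 ≤ (star (h k) ⬝ᵥ Qm k' *ᵥ h k).re :=
    fun k k' => ((psd_iff_re _).mp (hQm1 k')).2 (h k)
  have hck : ∀ k, 0 < (star (h k) ⬝ᵥ Qm k *ᵥ h k).re := by
    intro k
    have h2 := hQm2 k
    have hsum : 0 ≤ ∑ k' ∈ univ.erase k, (star (h k) ⬝ᵥ Qm k' *ᵥ h k).re :=
      Finset.sum_nonneg fun k' _ => hint k k'
    have h3 : 0 ≤ γ k * ∑ k' ∈ univ.erase k, (star (h k) ⬝ᵥ Qm k' *ᵥ h k).re :=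
      mul_nonneg (hγ k).le hsum
    have h4 : 0 < γ k * σ2 := mul_pos (hγ k) hσ
    linarith
  -- rank-one reduction at each user
  choose Q' hpsd' hsig hdom htr hrank using
    fun k => rankone_reduce (Qm k) (hQm1 k) (h k) (hck k)
  have hQ'F : Q' ∈ F := by
    rw [hF]
    refine ⟨hpsd', fun k => ?_⟩
    have hsumle : ∑ k' ∈ univ.erase k, (star (h k) ⬝ᵥ Q' k' *ᵥ h k).re
        ≤ ∑ k' ∈ univ.erase k, (star (h k) ⬝ᵥ Qm k' *ᵥ h k).re :=
      Finset.sum_le_sum fun k' _ => hdom k' (h k)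
    have h2 := hQm2 k
    have h3 := mul_le_mul_of_nonneg_left hsumle (hγ k).le
    rw [hsig k]
    linarith
  have hobj' : ∑ k, ((Q' k).trace).re ≤ ∑ k, ((Qm k).trace).re :=
    Finset.sum_le_sum fun k _ => htr k
  exact ⟨Q', hQ'F, fun Q hQ => le_trans hobj' (hminF Q hQ), hrank⟩
end
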